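/- Let p : (0,1] → ℝ be positive with p ∈ L¹[ε,1] for all ε ∈ (0,1) and ∫_ε^1 p → ∞ as ε → 0+, let k < 0, and set x₁(t) = exp(k∫_t^1 p). For f ∈ L¹(0,1): ∫_0^1 |k| p(t) x₁(t) (∫_t^1 |f(s)|/x₁(s) ds) dt = ∫_0^1 (1 - x₁(0+)/x₁(s))|f(s)| ds = ∫_0^1 |f(s)| ds, where x₁(0+) = lim_{t→0+} x₁(t) = 0. -/

import Mathlib

open MeasureTheory Set Filter Topology
open scoped ENNReal

lemma aux_minlog_int (M : ℝ) (hM : 0 ≤ M) :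
    IntegrableOn (fun c => min (-Real.log c) M) (Ioc (0:ℝ) 1) := by
  set E := Real.exp (-M) with hE
  have hE0 : 0 < E := Real.exp_pos _
  have hE1 : E ≤ 1 := Real.exp_le_one_iff.mpr (by linarith)
  have hlogE : Real.log E = -M := Real.log_exp _
  have hcong1 : ∀ c ∈ Ioc (0:ℝ) E, min (-Real.log c) M = M := by
    intro c hc
    have : Real.log c ≤ -M := by
      rw [← hlogE]; exact Real.log_le_log hc.1 hc.2
    exact min_eq_right (by linarith)
  have hcong2 : ∀ c ∈ Ioc E 1, min (-Real.log c) M = -Real.log c := by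
    intro c hc
    have : -M ≤ Real.log c := by
      rw [← hlogE]; exact Real.log_le_log hE0 hc.1.le
    exact min_eq_left (by linarith)
  have hlogint : IntervalIntegrable (fun c => -Real.log c) volume E 1 := by
    apply ContinuousOn.intervalIntegrable
    apply ContinuousOn.neg
    apply Real.continuousOn_log.mono
    intro x hx
    rcases hx with ⟨h1, h2⟩
    simp only [mem_compl_iff, mem_singleton_iff]
    have : min E 1 ≤ x := by simpa using h1
    have := lt_of_lt_of_le (lt_min hE0 one_pos) this
    linarith
  have hint2 : IntegrableOn (fun c => -Real.log c) (Ioc E 1) := by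
    rw [← intervalIntegrable_iff_integrableOn_Ioc_of_le hE1]
    exact hlogint
  have hi1 : IntegrableOn (fun c => min (-Real.log c) M) (Ioc (0:ℝ) E) := by
    apply (integrableOn_const ?_).congr_fun (fun c hc => (hcong1 c hc).symm)
      measurableSet_Ioc
    · simp [Real.volume_Ioc]
  have hi2 : IntegrableOn (fun c => min (-Real.log c) M) (Ioc E 1) := by
    exact hint2.congr_fun (fun c hc => (hcong2 c hc).symm) measurableSet_Ioc
  have hsplit : Ioc (0:ℝ) 1 = Ioc 0 E ∪ Ioc E 1 := (Ioc_union_Ioc_eq_Ioc hE0.le hE1).symm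
  rw [hsplit]
  exact hi1.union hi2

/-- `∫_0^1 min(-log c, M) dc = 1 - exp(-M)` for `M ≥ 0`. -/
lemma aux_minlog (M : ℝ) (hM : 0 ≤ M) :
    ∫ c in Ioc (0:ℝ) 1, min (-Real.log c) M = 1 - Real.exp (-M) := by
  set E := Real.exp (-M) with hE
  have hE0 : 0 < E := Real.exp_pos _
  have hE1 : E ≤ 1 := Real.exp_le_one_iff.mpr (by linarith)
  have hlogE : Real.log E = -M := Real.log_exp _
  -- congruences on the two pieces
  have hcong1 : ∀ c ∈ Ioc (0:ℝ) E, min (-Real.log c) M = M := by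
    intro c hc
    have : Real.log c ≤ -M := by
      rw [← hlogE]; exact Real.log_le_log hc.1 hc.2
    exact min_eq_right (by linarith)
  have hcong2 : ∀ c ∈ Ioc E 1, min (-Real.log c) M = -Real.log c := by
    intro c hc
    have : -M ≤ Real.log c := by
      rw [← hlogE]; exact Real.log_le_log hE0 hc.1.le
    exact min_eq_left (by linarith)
  have hlogint : IntervalIntegrable (fun c => -Real.log c) volume E 1 := by
    apply ContinuousOn.intervalIntegrable
    apply ContinuousOn.neg
    apply Real.continuousOn_log.mono
    intro x hx
    rcases hx with ⟨h1, h2⟩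
    simp only [mem_compl_iff, mem_singleton_iff]
    have : min E 1 ≤ x := by simpa using h1
    have := lt_of_lt_of_le (lt_min hE0 one_pos) this
    linarith
  have hint2 : IntegrableOn (fun c => -Real.log c) (Ioc E 1) := by
    rw [← intervalIntegrable_iff_integrableOn_Ioc_of_le hE1]
    exact hlogint
  have hi1 : IntegrableOn (fun c => min (-Real.log c) M) (Ioc (0:ℝ) E) := by
    apply (integrableOn_const ?_).congr_fun (fun c hc => (hcong1 c hc).symm)
      measurableSet_Ioc
    · simp [Real.volume_Ioc]
  have hi2 : IntegrableOn (fun c => min (-Real.log c) M) (Ioc E 1) := by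
    exact hint2.congr_fun (fun c hc => (hcong2 c hc).symm) measurableSet_Ioc
  have hsplit : Ioc (0:ℝ) 1 = Ioc 0 E ∪ Ioc E 1 := (Ioc_union_Ioc_eq_Ioc hE0.le hE1).symm
  rw [hsplit, setIntegral_union (Ioc_disjoint_Ioc_of_le le_rfl) measurableSet_Ioc hi1 hi2]
  have h1 : ∫ c in Ioc (0:ℝ) E, min (-Real.log c) M = M * E := by
    rw [setIntegral_congr_fun measurableSet_Ioc hcong1]
    simp [Real.volume_Ioc, mul_comm, hE0.le]
  have h2 : ∫ c in Ioc E 1, min (-Real.log c) M = 1 - E - M * E := by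
    rw [setIntegral_congr_fun measurableSet_Ioc hcong2]
    have : ∫ c in Ioc E 1, -Real.log c = ∫ c in E..1, -Real.log c :=
      (intervalIntegral.integral_of_le hE1).symm
    rw [this]
    have hderiv : ∀ x ∈ uIcc E 1, HasDerivAt (fun c => c - c * Real.log c) (-Real.log x) x := by
      intro x hx
      rw [uIcc_of_le hE1] at hx
      have hx0 : x ≠ 0 := by have := hE0.trans_le hx.1; linarith
      have h := (hasDerivAt_id x).mul (Real.hasDerivAt_log hx0)
      have h' := (hasDerivAt_id x).sub h
      have e : (1 - (1 * Real.log x + id x * x⁻¹)) = -Real.log x := by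
        simp only [id, one_mul, mul_inv_cancel₀ hx0]; ring
      rw [e] at h'
      exact h'
    rw [intervalIntegral.integral_eq_sub_of_hasDerivAt hderiv hlogint]
    simp [hlogE]
    ring
  rw [h1, h2]; ring

/-- Core survival identity. -/
lemma aux_core (q : ℝ → ℝ) (a s : ℝ) (has : a < s)
    (hq_int : IntegrableOn q (Icc a s))
    (hq_nn : ∀ t ∈ Ioc a s, 0 ≤ q t) :
    ∫⁻ t in Ioc a s, ENNReal.ofReal (q t * Real.exp (-(∫ u in Ioc t s, q u)))
      = ENNReal.ofReal (1 - Real.exp (-(∫ u in Ioc a s, q u))) := by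
  set F : ℝ → ℝ := fun t => ∫ u in Ioc t s, q u with hF
  have hqInt' : ∀ t ∈ Icc a s, IntegrableOn q (Ioc t s) := fun t ht =>
    hq_int.mono_set (fun u hu => ⟨le_trans ht.1 hu.1.le, hu.2⟩)
  have hFadd : ∀ t t', a ≤ t → t ≤ t' → t' ≤ s → F t = (∫ u in Ioc t t', q u) + F t' := by
    intro t t' h1 h2 h3
    have heq : Ioc t s = Ioc t t' ∪ Ioc t' s := (Ioc_union_Ioc_eq_Ioc h2 h3).symm
    rw [hF]
    simp only
    rw [heq, setIntegral_union (Ioc_disjoint_Ioc_of_le le_rfl) measurableSet_Ioc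
      (hq_int.mono_set (fun u hu => ⟨le_trans h1 hu.1.le, le_trans hu.2 h3⟩))
      (hqInt' t' ⟨le_trans h1 h2, h3⟩)]
  have hFanti : ∀ t t', a ≤ t → t ≤ t' → t' ≤ s → F t' ≤ F t := by
    intro t t' h1 h2 h3
    rw [hFadd t t' h1 h2 h3]
    have : 0 ≤ ∫ u in Ioc t t', q u :=
      setIntegral_nonneg measurableSet_Ioc fun u hu =>
        hq_nn u ⟨lt_of_le_of_lt h1 hu.1, le_trans hu.2 h3⟩
    linarith
  have hFs : F s = 0 := by simp [hF]
  have hFnn : ∀ t ∈ Icc a s, 0 ≤ F t := by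
    intro t ht
    exact setIntegral_nonneg measurableSet_Ioc fun u hu =>
      hq_nn u ⟨lt_of_le_of_lt ht.1 hu.1, hu.2⟩
  set M := F a with hM
  have hMnn : 0 ≤ M := hFnn a ⟨le_rfl, has.le⟩
  have hFle : ∀ t ∈ Icc a s, F t ≤ M := fun t ht => hFanti a t le_rfl ht.1 ht.2
  have hFcont : ContinuousOn F (Icc a s) := by
    have h1 : ContinuousOn (fun t => M - ∫ u in Ioc a t, q u) (Icc a s) :=
      continuousOn_const.sub (intervalIntegral.continuousOn_primitive hq_int)
    apply h1.congr
    intro t ht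
    have := hFadd a t le_rfl ht.1 ht.2
    simp only
    rw [hM] at *
    linarith
  set μ0 := volume.restrict (Ioc a s) with hμ0
  have hq_meas : AEMeasurable q μ0 := by
    have := hq_int.aestronglyMeasurable.aemeasurable
    exact this.mono_measure (Measure.restrict_mono Ioc_subset_Icc_self le_rfl)
  have hqd_meas : AEMeasurable (fun t => ENNReal.ofReal (q t)) μ0 :=
    ENNReal.measurable_ofReal.comp_aemeasurable hq_meas
  have hF_meas : AEMeasurable F μ0 :=
    ((hFcont.mono Ioc_subset_Icc_self).aemeasurable measurableSet_Ioc)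
  set ν := μ0.withDensity (fun t => ENNReal.ofReal (q t)) with hν
  have hg_meas : AEMeasurable (fun t => ENNReal.ofReal (Real.exp (-F t))) μ0 :=
    ENNReal.measurable_ofReal.comp_aemeasurable
      (Real.measurable_exp.comp_aemeasurable hF_meas.neg)
  -- Step 1 : LHS as integral against ν
  have step1 : ∫⁻ t in Ioc a s, ENNReal.ofReal (q t * Real.exp (-F t))
      = ∫⁻ t, ENNReal.ofReal (Real.exp (-F t)) ∂ν := by
    rw [hν, lintegral_withDensity_eq_lintegral_mul₀ hqd_meas hg_meas]
    apply lintegral_congr_ae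
    filter_upwards [ae_restrict_mem measurableSet_Ioc] with t ht
    simp only [Pi.mul_apply]
    rw [← ENNReal.ofReal_mul (hq_nn t ht)]
  have hq_int0 : Integrable q μ0 := hq_int.mono_set Ioc_subset_Icc_self
  have hνIoc : ∀ b, a ≤ b → b ≤ s → ν (Ioc b s) = ENNReal.ofReal (F b) := by
    intro b hb hb2
    rw [hν, withDensity_apply _ measurableSet_Ioc, hμ0,
      Measure.restrict_restrict measurableSet_Ioc]
    have hinter : Ioc b s ∩ Ioc a s = Ioc b s := inter_eq_left.mpr
      (fun u hu => ⟨lt_of_le_of_lt hb hu.1, hu.2⟩)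
    rw [hinter, ← ofReal_integral_eq_lintegral_ofReal (hqInt' b ⟨hb, hb2⟩)]
    filter_upwards [ae_restrict_mem measurableSet_Ioc] with u hu
    exact hq_nn u ⟨lt_of_le_of_lt hb hu.1, hu.2⟩
  have hνcompl : ν (Ioc a s)ᶜ = 0 := by
    apply (withDensity_absolutelyContinuous μ0 _)
    rw [hμ0, Measure.restrict_apply measurableSet_Ioc.compl]
    simp
  have hνset : ∀ A : Set ℝ, ν A = ν (A ∩ Ioc a s) := by
    intro A
    have h0 : ν (A \ Ioc a s) = 0 :=
      measure_mono_null (fun x hx => hx.2) hνcompl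
    refine le_antisymm ?_ (measure_mono (inter_subset_left))
    conv_lhs => rw [← Set.inter_union_diff A (Ioc a s)]
    calc ν (A ∩ Ioc a s ∪ A \ Ioc a s) ≤ ν (A ∩ Ioc a s) + ν (A \ Ioc a s) := measure_union_le _ _
      _ = ν (A ∩ Ioc a s) := by rw [h0, add_zero]
  have hνfin : IsFiniteMeasure ν := by
    constructor
    rw [hν, withDensity_apply _ MeasurableSet.univ, Measure.restrict_univ]
    rw [← ofReal_integral_eq_lintegral_ofReal hq_int0
      (by filter_upwards [ae_restrict_mem measurableSet_Ioc] with u hu; exact hq_nn u hu)]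
    exact ENNReal.ofReal_lt_top
  -- Step 2 : layer cake
  have step2 : ∫⁻ t, ENNReal.ofReal (Real.exp (-F t)) ∂ν
      = ∫⁻ c in Ioi (0:ℝ), ν {t | c < Real.exp (-F t)} := by
    apply lintegral_eq_lintegral_meas_lt ν
    · exact ae_of_all _ (fun t => (Real.exp_pos _).le)
    · exact (Real.measurable_exp.comp_aemeasurable hF_meas.neg).mono_ac
        (withDensity_absolutelyContinuous μ0 _)
  -- Step 3 : compute the measure of superlevel sets
  have step3 : ∀ c ∈ Ioi (0:ℝ), ν {t | c < Real.exp (-F t)}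
      = ENNReal.ofReal (min (-Real.log c) M) := by
    intro c hc
    have hc0 : (0:ℝ) < c := hc
    rcases le_or_gt 1 c with hc1 | hc1
    · -- c ≥ 1 : empty
      have hempty : {t | c < Real.exp (-F t)} ∩ Ioc a s = ∅ := by
        apply eq_empty_iff_forall_notMem.mpr
        rintro t ⟨ht1, ht2⟩
        have h1 : Real.exp (-F t) ≤ 1 := by
          rw [Real.exp_le_one_iff]
          have := hFnn t (Ioc_subset_Icc_self ht2); linarith
        rw [mem_setOf_eq] at ht1
        have : (1:ℝ) < 1 := lt_of_lt_of_le (lt_of_le_of_lt hc1 ht1) h1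
        exact absurd this (by norm_num)
      rw [hνset _, hempty, measure_empty]
      have h2 : -Real.log c ≤ 0 := by
        have := Real.log_nonneg hc1; linarith
      rw [eq_comm, ENNReal.ofReal_eq_zero]
      exact le_trans (min_le_left _ _) h2
    · -- 0 < c < 1
      set c' := -Real.log c with hc'
      have hc'pos : 0 < c' := by
        have := Real.log_neg hc0 hc1; rw [hc']; linarith
      have hcond : ∀ t, (c < Real.exp (-F t) ↔ F t < c') := by
        intro t
        rw [← Real.log_lt_iff_lt_exp hc0, hc']
        constructor <;> intro h <;> linarith
      rcases lt_or_ge M c' with hMc | hMc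
      · -- whole interval
        have hwhole : {t | c < Real.exp (-F t)} ∩ Ioc a s = Ioc a s := by
          apply inter_eq_right.mpr
          intro t ht
          rw [mem_setOf_eq, hcond t]
          exact lt_of_le_of_lt (hFle t (Ioc_subset_Icc_self ht)) hMc
        rw [hνset _, hwhole, hνIoc a le_rfl has.le, min_eq_right (by linarith)]
      · -- intermediate level: find the crossing point τ
        set T := {t ∈ Icc a s | c' ≤ F t} with hT
        have hTne : a ∈ T := ⟨⟨le_rfl, has.le⟩, hMc⟩
        have hTbdd : BddAbove T := (bddAbove_Icc).mono (fun t ht => ht.1)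
        have hTclosed : IsClosed T := by
          have hTeq : T = Icc a s ∩ F ⁻¹' (Ici c') := by
            ext t; simp [hT, mem_preimage, mem_Ici, mem_sep_iff]
          rw [hTeq]
          exact hFcont.preimage_isClosed_of_isClosed isClosed_Icc isClosed_Ici
        set τ := sSup T with hτ
        have hτT : τ ∈ T := hTclosed.csSup_mem ⟨a, hTne⟩ hTbdd
        have hτmem : τ ∈ Icc a s := hτT.1
        have hτF : c' ≤ F τ := hτT.2
        have hτs : τ < s := by
          rcases lt_or_eq_of_le hτmem.2 with h | h
          · exact h
          · exfalso; rw [h, hFs] at hτF; linarith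
        have hset : {t | c < Real.exp (-F t)} ∩ Ioc a s = Ioc τ s := by
          ext t
          simp only [mem_inter_iff, mem_setOf_eq, mem_Ioc, hcond t]
          constructor
          · rintro ⟨h1, h2, h3⟩
            refine ⟨?_, h3⟩
            by_contra h
            push_neg at h
            have := hFanti t τ h2.le h hτmem.2
            linarith
          · rintro ⟨h1, h2⟩
            have ht1 : a < t := lt_of_le_of_lt hτmem.1 h1
            refine ⟨?_, ht1, h2⟩
            have htT : t ∉ T := fun htT => absurd (le_csSup hTbdd htT) (not_le.mpr h1)
            have h3 : ¬ c' ≤ F t := fun hh => htT ⟨⟨ht1.le, h2⟩, hh⟩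
            linarith
        have hFτ : F τ = c' := by
          refine le_antisymm ?_ hτF
          have hmono : 𝓝[Ioc τ s] τ ≤ 𝓝[Icc a s] τ :=
            nhdsWithin_mono τ (fun u hu => ⟨le_trans hτmem.1 hu.1.le, hu.2⟩)
          have htend : Tendsto F (𝓝[Ioc τ s] τ) (𝓝 (F τ)) :=
            (hFcont τ hτmem).mono_left hmono
          have hne : (𝓝[Ioc τ s] τ).NeBot := by
            rw [nhdsWithin_Ioc_eq_nhdsGT hτs]
            exact nhdsGT_neBot τ
          refine le_of_tendsto htend ?_
          apply eventually_nhdsWithin_of_forall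
          intro u hu
          have hu2 : u ∈ {t | c < Real.exp (-F t)} ∩ Ioc a s := hset ▸ hu
          exact ((hcond u).mp hu2.1).le
        rw [hνset _, hset, hνIoc τ hτmem.1 hτmem.2, hFτ, min_eq_left hMc]
  -- Step 4 : compute the outer integral
  have step4 : ∫⁻ c in Ioi (0:ℝ), ν {t | c < Real.exp (-F t)}
      = ENNReal.ofReal (1 - Real.exp (-M)) := by
    rw [setLIntegral_congr_fun measurableSet_Ioi step3]
    rw [← Ioc_union_Ioi_eq_Ioi (zero_le_one' ℝ),
      lintegral_union measurableSet_Ioi Ioc_disjoint_Ioi_same]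
    have h2 : ∫⁻ c in Ioi (1:ℝ), ENNReal.ofReal (min (-Real.log c) M) = 0 := by
      rw [setLIntegral_congr_fun measurableSet_Ioi
        (fun c hc => ?_), lintegral_zero]
      have h3 : -Real.log c ≤ 0 := by
        have := Real.log_nonneg (le_of_lt hc); linarith
      rw [ENNReal.ofReal_eq_zero]
      exact le_trans (min_le_left _ _) h3
    rw [h2, add_zero,
      ← ofReal_integral_eq_lintegral_ofReal (aux_minlog_int M hMnn)
        (by filter_upwards [ae_restrict_mem measurableSet_Ioc] with c hc
            simp only [Pi.zero_apply]
            exact le_min (by have := Real.log_nonpos hc.1.le hc.2; linarith) hMnn),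
      aux_minlog M hMnn]
  rw [step1, step2, step4]

/-- splitting of the tail integral -/
lemma aux_split (p : ℝ → ℝ) (hp_int : ∀ ε ∈ Ioo (0:ℝ) 1, IntegrableOn p (Icc ε 1))
    (t s : ℝ) (ht : 0 < t) (hts : t ≤ s) (hs : s ≤ 1) :
    (∫ u in Ioc t 1, p u) = (∫ u in Ioc t s, p u) + ∫ u in Ioc s 1, p u := by
  rcases eq_or_lt_of_le (hts.trans hs) with h1 | h1
  · -- t = 1, hence s = 1
    have hts1 : t = 1 := h1
    have hs1 : s = 1 := le_antisymm hs (hts1 ▸ hts)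
    simp [hts1, hs1]
  · have hint : IntegrableOn p (Icc t 1) := hp_int t ⟨ht, h1⟩
    have heq : Ioc t 1 = Ioc t s ∪ Ioc s 1 := (Ioc_union_Ioc_eq_Ioc hts hs).symm
    rw [heq, setIntegral_union (Ioc_disjoint_Ioc_of_le le_rfl) measurableSet_Ioc
      (hint.mono_set (fun u hu => ⟨hu.1.le, hu.2.trans hs⟩))
      (hint.mono_set (fun u hu => ⟨hts.trans hu.1.le, hu.2⟩))]

/-- a.e.-measurability of `p` and of the solution on `(0,1]`. -/
lemma aux_meas (p : ℝ → ℝ) (k : ℝ)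
    (hp_int : ∀ ε ∈ Ioo (0:ℝ) 1, IntegrableOn p (Icc ε 1)) :
    AEMeasurable p (volume.restrict (Ioc 0 1)) ∧
    AEMeasurable (fun t => Real.exp (k * ∫ u in Ioc t 1, p u)) (volume.restrict (Ioc 0 1)) := by
  have hc : ∀ n : ℕ, (1:ℝ)/(n+2) ∈ Ioo (0:ℝ) 1 := by
    intro n
    constructor
    · positivity
    · rw [div_lt_one (by positivity)]
      have : (0:ℝ) ≤ n := Nat.cast_nonneg n
      linarith
  have hunion : Ioc (0:ℝ) 1 = ⋃ n : ℕ, Ioc ((1:ℝ)/(n+2)) 1 := by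
    ext x
    simp only [mem_iUnion, mem_Ioc]
    constructor
    · rintro ⟨hx0, hx1⟩
      obtain ⟨n, hn⟩ := exists_nat_gt (1/x)
      refine ⟨n, ?_, hx1⟩
      rw [div_lt_iff₀ (by positivity)]
      rw [div_lt_iff₀ hx0] at hn
      nlinarith
    · rintro ⟨n, hn0, hn1⟩
      exact ⟨lt_trans (hc n).1 hn0, hn1⟩
  have key : ∀ n : ℕ, AEMeasurable p (volume.restrict (Ioc ((1:ℝ)/(n+2)) 1)) ∧
      AEMeasurable (fun t => Real.exp (k * ∫ u in Ioc t 1, p u))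
        (volume.restrict (Ioc ((1:ℝ)/(n+2)) 1)) := by
    intro n
    set a := (1:ℝ)/(n+2)
    have hint : IntegrableOn p (Icc a 1) := hp_int a (hc n)
    have hmono : volume.restrict (Ioc a 1) ≤ volume.restrict (Icc a 1) :=
      Measure.restrict_mono Ioc_subset_Icc_self le_rfl
    constructor
    · exact hint.aestronglyMeasurable.aemeasurable.mono_measure hmono
    · have hGcont : ContinuousOn (fun t => ∫ u in Ioc t 1, p u) (Icc a 1) := by
        have h1 : ContinuousOn (fun t => (∫ u in Ioc a 1, p u) - ∫ u in Ioc a t, p u) (Icc a 1) :=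
          continuousOn_const.sub (intervalIntegral.continuousOn_primitive hint)
        apply h1.congr
        intro t ht
        have := aux_split p hp_int a t (hc n).1 ht.1 ht.2
        simp only
        linarith
      have : ContinuousOn (fun t => Real.exp (k * ∫ u in Ioc t 1, p u)) (Icc a 1) :=
        Real.continuous_exp.comp_continuousOn (continuousOn_const.mul hGcont)
      exact (this.mono Ioc_subset_Icc_self).aemeasurable measurableSet_Ioc
        |>.mono_measure le_rfl
  rw [hunion]
  exact ⟨aemeasurable_iUnion_iff.mpr (fun n => (key n).1),
    aemeasurable_iUnion_iff.mpr (fun n => (key n).2)⟩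

/-- finite-interval integral of the derivative of the solution -/
lemma aux_fincore (p : ℝ → ℝ) (k : ℝ) (hk : k < 0)
    (hp_pos : ∀ t ∈ Ioc (0:ℝ) 1, 0 < p t)
    (hp_int : ∀ ε ∈ Ioo (0:ℝ) 1, IntegrableOn p (Icc ε 1))
    (a s : ℝ) (ha : 0 < a) (has : a < s) (hs : s ≤ 1) :
    ∫⁻ t in Ioc a s, ENNReal.ofReal (|k| * p t * Real.exp (k * ∫ u in Ioc t 1, p u))
      = ENNReal.ofReal (Real.exp (k * ∫ u in Ioc s 1, p u)
          - Real.exp (k * ∫ u in Ioc a 1, p u)) := by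
  have ha1 : a < 1 := lt_of_lt_of_le has hs
  have habs : |k| = -k := abs_of_neg hk
  set q : ℝ → ℝ := fun u => |k| * p u with hq
  have hq_int : IntegrableOn q (Icc a s) :=
    ((hp_int a ⟨ha, ha1⟩).mono_set (Icc_subset_Icc le_rfl hs)).const_mul _
  have hq_nn : ∀ t ∈ Ioc a s, 0 ≤ q t := fun t ht =>
    mul_nonneg (abs_nonneg k) (hp_pos t ⟨lt_trans ha ht.1, ht.2.trans hs⟩).le
  have hkey : ∀ t, a ≤ t → t ≤ s →
      k * (∫ u in Ioc t 1, p u) = k * (∫ u in Ioc s 1, p u) - ∫ u in Ioc t s, q u := by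
    intro t h1 h2
    have hsplit := aux_split p hp_int t s (lt_of_lt_of_le ha h1) h2 hs
    have hql : (∫ u in Ioc t s, q u) = |k| * ∫ u in Ioc t s, p u := by
      rw [hq]; exact integral_const_mul _ _
    rw [hsplit, hql, habs]; ring
  have hcongr : ∀ t ∈ Ioc a s,
      ENNReal.ofReal (|k| * p t * Real.exp (k * ∫ u in Ioc t 1, p u))
        = ENNReal.ofReal (Real.exp (k * ∫ u in Ioc s 1, p u))
          * ENNReal.ofReal (q t * Real.exp (-(∫ u in Ioc t s, q u))) := by
    intro t ht
    rw [← ENNReal.ofReal_mul (Real.exp_nonneg _)]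
    congr 1
    rw [hkey t ht.1.le ht.2, Real.exp_sub]
    rw [hq]
    simp only
    rw [Real.exp_neg]
    field_simp
  rw [setLIntegral_congr_fun measurableSet_Ioc hcongr,
    lintegral_const_mul' _ _ ENNReal.ofReal_ne_top,
    aux_core q a s has hq_int hq_nn,
    ← ENNReal.ofReal_mul (Real.exp_nonneg _)]
  congr 1
  have := hkey a le_rfl has.le
  rw [mul_sub, mul_one, ← Real.exp_add]
  congr 2
  linarith

/-- the inner integral: `∫_0^s |k| p X = X s`. -/
lemma aux_C (p : ℝ → ℝ) (k : ℝ) (hk : k < 0)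
    (hp_pos : ∀ t ∈ Ioc (0:ℝ) 1, 0 < p t)
    (hp_int : ∀ ε ∈ Ioo (0:ℝ) 1, IntegrableOn p (Icc ε 1))
    (hX0 : Tendsto (fun t => Real.exp (k * ∫ u in Ioc t 1, p u)) (𝓝[>] (0:ℝ)) (𝓝 0))
    (s : ℝ) (hs : s ∈ Ioc (0:ℝ) 1) :
    ∫⁻ t in Ioo 0 s, ENNReal.ofReal (|k| * p t * Real.exp (k * ∫ u in Ioc t 1, p u))
      = ENNReal.ofReal (Real.exp (k * ∫ u in Ioc s 1, p u)) := by
  set X : ℝ → ℝ := fun t => Real.exp (k * ∫ u in Ioc t 1, p u) with hX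
  set g : ℝ → ℝ≥0∞ := fun t => ENNReal.ofReal (|k| * p t * X t) with hg
  -- monotone approximation by Ioc (u n) s
  set u : ℕ → ℝ := fun n => s / (n + 2) with hu
  have hun : ∀ n, 0 < u n := fun n =>
    div_pos hs.1 (by positivity : (0:ℝ) < (n:ℝ) + 2)
  have huns : ∀ n, u n < s := by
    intro n
    have h2 : (1:ℝ) < (n:ℝ) + 2 := by
      have : (0:ℝ) ≤ (n:ℝ) := Nat.cast_nonneg n
      linarith
    calc u n = s / ((n:ℝ) + 2) := rfl
      _ < s / 1 := div_lt_div_of_pos_left hs.1 one_pos h2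
      _ = s := div_one s
  have hu_anti : ∀ n m, n ≤ m → u m ≤ u n := by
    intro n m h
    have h1 : (0:ℝ) < (n:ℝ) + 2 := by positivity
    have h2 : (n:ℝ) + 2 ≤ (m:ℝ) + 2 := by
      have := (Nat.cast_le (α := ℝ)).mpr h; linarith
    exact div_le_div_of_nonneg_left hs.1.le h1 h2
  have hmono : Monotone (fun n => Ioc (u n) s) := by
    intro n m h
    exact Ioc_subset_Ioc (hu_anti n m h) le_rfl
  have hcup : (⋃ n, Ioc (u n) s) = Ioc 0 s := by
    apply subset_antisymm
    · exact iUnion_subset (fun n => Ioc_subset_Ioc (hun n).le le_rfl)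
    · intro x hx
      obtain ⟨n, hn⟩ := exists_nat_gt (s / x)
      refine mem_iUnion.mpr ⟨n, ?_, hx.2⟩
      rw [hu]
      simp only
      rw [div_lt_iff₀ (by positivity : (0:ℝ) < (n:ℝ) + 2)]
      rw [div_lt_iff₀ hx.1] at hn
      nlinarith [hx.1]
  -- reduce Ioo to Ioc
  have hIoo : ∫⁻ t in Ioo 0 s, g t = ∫⁻ t in Ioc 0 s, g t := by
    rw [Measure.restrict_congr_set Ioo_ae_eq_Ioc]
  -- monotone convergence via indicator functions
  have hmeas : ∀ n, AEMeasurable (fun t => (Ioc (u n) s).indicator g t) volume := by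
    intro n
    rw [aemeasurable_indicator_iff measurableSet_Ioc]
    have h1 : u n ∈ Ioo (0:ℝ) 1 := ⟨hun n, lt_of_lt_of_le (huns n) hs.2⟩
    obtain ⟨hp_meas, hX_meas⟩ := aux_meas p k hp_int
    have hsub : Ioc (u n) s ⊆ Ioc 0 1 := Ioc_subset_Ioc (hun n).le hs.2
    have hle : volume.restrict (Ioc (u n) s) ≤ volume.restrict (Ioc 0 1) :=
      Measure.restrict_mono hsub le_rfl
    exact ENNReal.measurable_ofReal.comp_aemeasurable
      (((aemeasurable_const.mul (hp_meas.mono_measure hle)).mul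
        (hX_meas.mono_measure hle)))
  have hmono_fn : ∀ x, Monotone (fun n => (Ioc (u n) s).indicator g x) := by
    intro x n m h
    exact indicator_le_indicator_of_subset (hmono h) (fun _ => zero_le) x
  have hsup : ∀ x, (⨆ n, (Ioc (u n) s).indicator g x) = (Ioc 0 s).indicator g x := by
    intro x
    by_cases hx : x ∈ Ioc 0 s
    · rw [indicator_of_mem hx]
      rw [← hcup] at hx
      obtain ⟨n, hn⟩ := mem_iUnion.mp hx
      apply le_antisymm
      · exact iSup_le (fun m => (indicator_le_self _ _) x)
      · exact le_iSup_of_le n (by rw [indicator_of_mem hn])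
    · rw [indicator_of_notMem hx]
      rw [← hcup] at hx
      simp only [mem_iUnion, not_exists] at hx
      simp [indicator_of_notMem (hx _)]
  have hMCT : ∫⁻ t in Ioc 0 s, g t = ⨆ n, ∫⁻ t in Ioc (u n) s, g t := by
    have h1 : ∀ n, ∫⁻ t in Ioc (u n) s, g t = ∫⁻ t, (Ioc (u n) s).indicator g t :=
      fun n => (lintegral_indicator measurableSet_Ioc g).symm
    simp_rw [h1]
    rw [← lintegral_iSup' hmeas (ae_of_all _ hmono_fn),
      ← lintegral_indicator measurableSet_Ioc g]
    exact lintegral_congr (fun x => (hsup x).symm)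
  -- value of each approximant
  have hval : ∀ n, ∫⁻ t in Ioc (u n) s, g t = ENNReal.ofReal (X s - X (u n)) := by
    intro n
    exact aux_fincore p k hk hp_pos hp_int (u n) s (hun n) (huns n) hs.2
  -- limit
  have hXlim : Tendsto (fun n => X (u n)) atTop (𝓝 0) := by
    apply hX0.comp
    rw [tendsto_nhdsWithin_iff]
    constructor
    · have : Tendsto (fun n : ℕ => s / (n + 2)) atTop (𝓝 0) := by
        apply Tendsto.div_atTop tendsto_const_nhds
        exact tendsto_atTop_add_const_right _ 2 tendsto_natCast_atTop_atTop
      exact this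
    · exact Eventually.of_forall (fun n => hun n)
  have hmono2 : Monotone (fun n => ENNReal.ofReal (X s - X (u n))) := by
    intro n m h
    apply ENNReal.ofReal_le_ofReal
    have : X (u m) ≤ X (u n) := by
      rw [hX]
      simp only
      apply Real.exp_le_exp.mpr
      have hsplit := aux_split p hp_int (u m) (u n) (hun m) (hu_anti n m h)
        (le_trans (huns n).le hs.2)
      have hnn : 0 ≤ ∫ x in Ioc (u m) (u n), p x :=
        setIntegral_nonneg measurableSet_Ioc
          (fun x hx => (hp_pos x ⟨lt_trans (hun m) hx.1,
            le_trans hx.2 (le_trans (huns n).le hs.2)⟩).le)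
      nlinarith [hsplit]
    linarith
  have htendsto : Tendsto (fun n => ENNReal.ofReal (X s - X (u n))) atTop
      (𝓝 (ENNReal.ofReal (X s))) := by
    have : Tendsto (fun n => X s - X (u n)) atTop (𝓝 (X s - 0)) :=
      tendsto_const_nhds.sub hXlim
    rw [sub_zero] at this
    exact (ENNReal.continuous_ofReal.tendsto _).comp this
  rw [hIoo, hMCT]
  simp_rw [hval]
  exact tendsto_nhds_unique (tendsto_atTop_iSup hmono2) htendsto

/-- Generalized model equation, `k < 0`: with `x₁ t = exp (k ∫_t^1 p)` one has
`x₁(0+) = 0` and the Tonelli identity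
`∫_0^1 |k| p t x₁ t (∫_t^1 |f s| / x₁ s ds) dt = ∫_0^1 |f s| ds`. -/
theorem stmt_17 (p : ℝ → ℝ)
    (hp_pos : ∀ t ∈ Ioc (0:ℝ) 1, 0 < p t)
    (hp_int : ∀ ε ∈ Ioo (0:ℝ) 1, IntegrableOn p (Icc ε 1))
    (hp_div : Tendsto (fun ε => ∫ t in Ioc ε 1, p t) (𝓝[>] (0:ℝ)) atTop)
    (k : ℝ) (hk : k < 0)
    (x₁ : ℝ → ℝ) (hx₁ : ∀ t ∈ Ioc (0:ℝ) 1, x₁ t = Real.exp (k * ∫ s in Ioc t 1, p s))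
    (f : ℝ → ℝ) (hf : IntegrableOn f (Ioc 0 1)) :
    Tendsto x₁ (𝓝[>] (0:ℝ)) (𝓝 0) ∧
    (∫ t in Ioc (0:ℝ) 1, |k| * p t * x₁ t * ∫ s in Ioc t 1, |f s| / x₁ s)
      = ∫ s in Ioc (0:ℝ) 1, |f s| := by
  set X : ℝ → ℝ := fun t => Real.exp (k * ∫ u in Ioc t 1, p u) with hXdef
  -- the limit of X at 0⁺
  have hX0 : Tendsto X (𝓝[>] (0:ℝ)) (𝓝 0) := by
    have h1 : Tendsto (fun t => k * ∫ u in Ioc t 1, p u) (𝓝[>] (0:ℝ)) atBot :=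
      Tendsto.const_mul_atTop_of_neg hk hp_div
    exact Real.tendsto_exp_atBot.comp h1
  have hx₁X : x₁ =ᶠ[𝓝[>] (0:ℝ)] X := by
    filter_upwards [Ioc_mem_nhdsGT_of_mem (left_mem_Ico.mpr zero_lt_one)] with t ht
    exact hx₁ t ht
  have part1 : Tendsto x₁ (𝓝[>] (0:ℝ)) (𝓝 0) := hX0.congr' hx₁X.symm
  refine ⟨part1, ?_⟩
  -- notation
  have hXpos : ∀ t, 0 < X t := fun t => Real.exp_pos _
  obtain ⟨hp_meas, hX_meas⟩ := aux_meas p k hp_int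
  set g : ℝ → ℝ≥0∞ := fun t => ENNReal.ofReal (|k| * p t * X t) with hg
  set h : ℝ → ℝ≥0∞ := fun s => ENNReal.ofReal (|f s| / X s) with hh
  have hg_meas : AEMeasurable g (volume.restrict (Ioc 0 1)) :=
    ENNReal.measurable_ofReal.comp_aemeasurable
      ((aemeasurable_const.mul hp_meas).mul hX_meas)
  have hf_meas : AEMeasurable f (volume.restrict (Ioc 0 1)) :=
    hf.aestronglyMeasurable.aemeasurable
  have hfabs_meas : AEMeasurable (fun s => |f s|) (volume.restrict (Ioc 0 1)) :=
    hf.abs.aestronglyMeasurable.aemeasurable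
  have hfabs_int : IntegrableOn (fun s => |f s|) (Ioc 0 1) := hf.abs
  have hh_meas : AEMeasurable h (volume.restrict (Ioc 0 1)) :=
    ENNReal.measurable_ofReal.comp_aemeasurable (hfabs_meas.div hX_meas)
  -- X is monotone on (0,1]
  have hXmono : ∀ t s, 0 < t → t ≤ s → s ≤ 1 → X t ≤ X s := by
    intro t s ht hts hs
    apply Real.exp_le_exp.mpr
    have hsplit := aux_split p hp_int t s ht hts hs
    have hnn : 0 ≤ ∫ u in Ioc t s, p u :=
      setIntegral_nonneg measurableSet_Ioc
        (fun u hu => (hp_pos u ⟨lt_trans ht hu.1, hu.2.trans hs⟩).le)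
    nlinarith [hsplit]
  -- inner integrals
  have hinner_int : ∀ t ∈ Ioc (0:ℝ) 1, IntegrableOn (fun s => |f s| / X s) (Ioc t 1) := by
    intro t ht
    have hsub : Ioc t 1 ⊆ Ioc 0 1 := Ioc_subset_Ioc ht.1.le le_rfl
    have hle : volume.restrict (Ioc t 1) ≤ volume.restrict (Ioc 0 1) :=
      Measure.restrict_mono hsub le_rfl
    apply Integrable.mono' ((hfabs_int.mono_set hsub).mul_const (X t)⁻¹)
    · exact ((hfabs_meas.div hX_meas).mono_measure hle).aestronglyMeasurable
    · filter_upwards [ae_restrict_mem measurableSet_Ioc] with s hs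
      rw [Real.norm_eq_abs, abs_of_nonneg (div_nonneg (abs_nonneg _) (hXpos s).le)]
      rw [div_eq_mul_inv]
      apply mul_le_mul_of_nonneg_left _ (abs_nonneg _)
      exact inv_anti₀ (hXpos t) (hXmono t s ht.1 hs.1.le hs.2)
  have hinner_nn : ∀ t, 0 ≤ ∫ s in Ioc t 1, |f s| / X s := fun t =>
    setIntegral_nonneg measurableSet_Ioc
      (fun s _ => div_nonneg (abs_nonneg _) (hXpos s).le)
  have hinner_eq : ∀ t ∈ Ioc (0:ℝ) 1,
      ENNReal.ofReal (∫ s in Ioc t 1, |f s| / X s) = ∫⁻ s in Ioc t 1, h s := by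
    intro t ht
    apply ofReal_integral_eq_lintegral_ofReal (hinner_int t ht)
    filter_upwards [ae_restrict_mem measurableSet_Ioc] with s _
    exact div_nonneg (abs_nonneg _) (hXpos s).le
  -- Tonelli swap
  set L : ℝ → ℝ≥0∞ := fun t => ∫⁻ s in Ioc t 1, h s with hL
  have hLanti : Antitone L := by
    intro t t' htt'
    exact lintegral_mono' (Measure.restrict_mono (Ioc_subset_Ioc htt' le_rfl) le_rfl) le_rfl
  have hLmeas : Measurable L := hLanti.measurable
  have hB : ∫⁻ t in Ioc (0:ℝ) 1, g t * L t
      = ∫⁻ s in Ioc (0:ℝ) 1, h s * ∫⁻ t in Ioo 0 s, g t := by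
    have hind : ∀ (t s : ℝ), ({w : ℝ × ℝ | w.1 < w.2}.indicator 1 (t, s) : ℝ≥0∞)
        = (Ioi t).indicator 1 s := by
      intro t s
      simp only [Set.indicator_apply, mem_setOf_eq, mem_Ioi, Pi.one_apply]
    have hindswap : ∀ (t s : ℝ), ({w : ℝ × ℝ | w.1 < w.2}.indicator 1 (t, s) : ℝ≥0∞)
        = (Iio s).indicator 1 t := by
      intro t s
      simp only [Set.indicator_apply, mem_setOf_eq, mem_Iio, Pi.one_apply]
    set Φ : ℝ → ℝ → ℝ≥0∞ := fun t s =>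
      g t * h s * ({w : ℝ × ℝ | w.1 < w.2}.indicator 1 (t, s)) with hΦ
    have hΦmeas : AEMeasurable (Function.uncurry Φ)
        ((volume.restrict (Ioc (0:ℝ) 1)).prod (volume.restrict (Ioc (0:ℝ) 1))) := by
      set π := (volume.restrict (Ioc (0:ℝ) 1)).prod (volume.restrict (Ioc (0:ℝ) 1)) with hπ
      have h1 : AEMeasurable (fun z : ℝ × ℝ => g z.1) π := by
        have hm : AEMeasurable g (Measure.map Prod.fst π) := by
          rw [hπ, Measure.map_fst_prod]
          exact hg_meas.smul_measure _
        exact hm.comp_measurable measurable_fst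
      have h2 : AEMeasurable (fun z : ℝ × ℝ => h z.2) π := by
        have hm : AEMeasurable h (Measure.map Prod.snd π) := by
          rw [hπ, Measure.map_snd_prod]
          exact hh_meas.smul_measure _
        exact hm.comp_measurable measurable_snd
      have h3 : AEMeasurable (fun z : ℝ × ℝ =>
          ({w : ℝ × ℝ | w.1 < w.2}.indicator 1 z : ℝ≥0∞)) π :=
        ((measurable_one.indicator (measurableSet_lt measurable_fst measurable_snd))).aemeasurable
      have : Function.uncurry Φ = fun z : ℝ × ℝ =>
          g z.1 * h z.2 * ({w : ℝ × ℝ | w.1 < w.2}.indicator 1 z) := by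
        ext z
        cases z
        simp [hΦ, Function.uncurry]
      rw [this]
      exact (h1.mul h2).mul h3
    have hleft : ∀ t ∈ Ioc (0:ℝ) 1, g t * L t = ∫⁻ s in Ioc (0:ℝ) 1, Φ t s := by
      intro t ht
      have e1 : ∀ s, Φ t s = (Ioi t).indicator (fun s => g t * h s) s := by
        intro s
        rw [hΦ]
        simp only [Set.indicator_apply, mem_setOf_eq, mem_Ioi, Pi.one_apply]
        by_cases hts : t < s <;> simp [hts]
      rw [setLIntegral_congr_fun measurableSet_Ioc (fun s _ => e1 s)]
      rw [lintegral_indicator measurableSet_Ioi, Measure.restrict_restrict measurableSet_Ioi]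
      have hset : Ioi t ∩ Ioc 0 1 = Ioc t 1 := by
        ext u
        simp only [mem_inter_iff, mem_Ioi, mem_Ioc]
        constructor
        · rintro ⟨h1, h2, h3⟩; exact ⟨h1, h3⟩
        · rintro ⟨h1, h2⟩; exact ⟨h1, lt_trans ht.1 h1, h2⟩
      rw [hset, lintegral_const_mul' _ _ ENNReal.ofReal_ne_top]
    have hright : ∀ s ∈ Ioc (0:ℝ) 1,
        (∫⁻ t in Ioc (0:ℝ) 1, Φ t s) = h s * ∫⁻ t in Ioo 0 s, g t := by
      intro s hs
      have e1 : ∀ t, Φ t s = (Iio s).indicator (fun t => g t * h s) t := by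
        intro t
        rw [hΦ]
        simp only [Set.indicator_apply, mem_setOf_eq, mem_Iio, Pi.one_apply]
        by_cases hts : t < s <;> simp [hts]
      rw [setLIntegral_congr_fun measurableSet_Ioc (fun t _ => e1 t)]
      rw [lintegral_indicator measurableSet_Iio, Measure.restrict_restrict measurableSet_Iio]
      have hset : Iio s ∩ Ioc 0 1 = Ioo 0 s := by
        ext u
        simp only [mem_inter_iff, mem_Iio, mem_Ioc, mem_Ioo]
        constructor
        · rintro ⟨h1, h2, h3⟩; exact ⟨h2, h1⟩
        · rintro ⟨h1, h2⟩; exact ⟨h2, h1, le_trans h2.le hs.2⟩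
      rw [hset, lintegral_mul_const' _ _ ENNReal.ofReal_ne_top]
      exact mul_comm _ _
    calc ∫⁻ t in Ioc (0:ℝ) 1, g t * L t
        = ∫⁻ t in Ioc (0:ℝ) 1, ∫⁻ s in Ioc (0:ℝ) 1, Φ t s :=
          setLIntegral_congr_fun measurableSet_Ioc hleft
      _ = ∫⁻ s in Ioc (0:ℝ) 1, ∫⁻ t in Ioc (0:ℝ) 1, Φ t s :=
          lintegral_lintegral_swap hΦmeas
      _ = ∫⁻ s in Ioc (0:ℝ) 1, h s * ∫⁻ t in Ioo 0 s, g t :=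
          setLIntegral_congr_fun measurableSet_Ioc hright
  -- inner integral value
  have hC : ∀ s ∈ Ioc (0:ℝ) 1, (∫⁻ t in Ioo 0 s, g t) = ENNReal.ofReal (X s) :=
    fun s hs => aux_C p k hk hp_pos hp_int hX0 s hs
  have hRHS : ∫⁻ s in Ioc (0:ℝ) 1, h s * ∫⁻ t in Ioo 0 s, g t
      = ∫⁻ s in Ioc (0:ℝ) 1, ENNReal.ofReal (|f s|) := by
    apply setLIntegral_congr_fun measurableSet_Ioc ?_
    intro s hs
    beta_reduce
    rw [hC s hs, hh]
    simp only
    rw [← ENNReal.ofReal_mul (div_nonneg (abs_nonneg _) (hXpos s).le)]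
    rw [div_mul_cancel₀ _ (hXpos s).ne']
  -- real/lintegral conversion of the right-hand side
  have hfabs_nn : 0 ≤ᵐ[volume.restrict (Ioc (0:ℝ) 1)] fun s => |f s| :=
    ae_of_all _ (fun s => abs_nonneg _)
  have hRHSreal : ENNReal.ofReal (∫ s in Ioc (0:ℝ) 1, |f s|)
      = ∫⁻ s in Ioc (0:ℝ) 1, ENNReal.ofReal (|f s|) :=
    ofReal_integral_eq_lintegral_ofReal hf.abs hfabs_nn
  -- replace x₁ by X in the LHS
  have hLHS1 : (∫ t in Ioc (0:ℝ) 1, |k| * p t * x₁ t * ∫ s in Ioc t 1, |f s| / x₁ s)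
      = ∫ t in Ioc (0:ℝ) 1, |k| * p t * X t * (L t).toReal := by
    apply setIntegral_congr_fun measurableSet_Ioc
    intro t ht
    have hinn : (∫ s in Ioc t 1, |f s| / x₁ s) = ∫ s in Ioc t 1, |f s| / X s := by
      apply setIntegral_congr_fun measurableSet_Ioc
      intro s hs
      show |f s| / x₁ s = |f s| / X s
      rw [hx₁ s ⟨lt_trans ht.1 hs.1, hs.2⟩]
    have hLt : (L t).toReal = ∫ s in Ioc t 1, |f s| / X s := by
      rw [hL]
      simp only
      rw [← hinner_eq t ht, ENNReal.toReal_ofReal (hinner_nn t)]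
    show |k| * p t * x₁ t * (∫ s in Ioc t 1, |f s| / x₁ s)
      = |k| * p t * X t * (L t).toReal
    rw [hinn, hx₁ t ht, hLt]
  -- conversion of the LHS
  have hT_nn : 0 ≤ᵐ[volume.restrict (Ioc (0:ℝ) 1)]
      fun t => |k| * p t * X t * (L t).toReal := by
    filter_upwards [ae_restrict_mem measurableSet_Ioc] with t ht
    have := hp_pos t ht
    positivity
  have hT_meas : AEMeasurable (fun t => |k| * p t * X t * (L t).toReal)
      (volume.restrict (Ioc (0:ℝ) 1)) :=
    ((aemeasurable_const.mul hp_meas).mul hX_meas).mul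
      (hLmeas.ennreal_toReal.aemeasurable)
  have hLHS2 : ∫⁻ t in Ioc (0:ℝ) 1, ENNReal.ofReal (|k| * p t * X t * (L t).toReal)
      = ∫⁻ t in Ioc (0:ℝ) 1, g t * L t := by
    apply setLIntegral_congr_fun measurableSet_Ioc ?_
    intro t ht
    beta_reduce
    have h1 : 0 ≤ |k| * p t * X t :=
      mul_nonneg (mul_nonneg (abs_nonneg _) (hp_pos t ht).le) (hXpos t).le
    rw [ENNReal.ofReal_mul h1, hg]
    simp only
    congr 1
    rw [hL]
    simp only
    rw [← hinner_eq t ht, ENNReal.toReal_ofReal (hinner_nn t), hinner_eq t ht]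
  rw [hLHS1]
  rw [integral_eq_lintegral_of_nonneg_ae hT_nn hT_meas.aestronglyMeasurable]
  rw [hLHS2, hB, hRHS, ← hRHSreal, ENNReal.toReal_ofReal
    (setIntegral_nonneg measurableSet_Ioc (fun s _ => abs_nonneg _))]
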